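/- For n = 2 agents with bipartition ({1},{2}), the matching output by Match: a maximum cardinality matching among those that restrict to maximum matchings on G[V_1] and G[V_2], is inclusion-maximal in G, and hence has cardinality at least half that of a maximum matching of G. -/
import Mathlib


open Finset
open scoped Classical symmDiff

/-- `M` is a matching of the simple graph `G`: a finite set of edges of `G`
that are pairwise vertex-disjoint. -/
def IsMatching {V : Type*} (G : SimpleGraph V) (M : Finset (Sym2 V)) : Prop :=
  ↑M ⊆ G.edgeSet ∧ ∀ v : V, ∀ e ∈ M, ∀ f ∈ M, v ∈ e → v ∈ f → e = f

/-- `v` is covered (matched) by the edge set `M`. -/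
def Covers {V : Type*} (M : Finset (Sym2 V)) (v : V) : Prop :=
  ∃ e ∈ M, v ∈ e

/-- Internal edges within `A`. -/
noncomputable def internalEdges {V : Type*} (A : Finset V) (M : Finset (Sym2 V)) :
    Finset (Sym2 V) :=
  M.filter (fun e => ∀ v ∈ e, v ∈ A)

/-- For two agents with bipartition `({1},{2})`, the output of Match — a maximum
cardinality matching among those restricting to maximum matchings on `G[V₁]` and
`G[V₂]` — is inclusion-maximal in `G`, and hence of cardinality at least half that of
any matching of `G`. -/
theorem stmt_18 {V : Type*} [DecidableEq V] (G : SimpleGraph V) (V₁ V₂ : Finset V)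
    (hpart : ∀ v : V, v ∈ V₁ ∨ v ∈ V₂) (hdisj : Disjoint V₁ V₂)
    (M : Finset (Sym2 V)) (hM : IsMatching G M)
    (hres1 : ∀ N : Finset (Sym2 V), IsMatching G N → (∀ e ∈ N, ∀ v ∈ e, v ∈ V₁) →
      N.card ≤ (internalEdges V₁ M).card)
    (hres2 : ∀ N : Finset (Sym2 V), IsMatching G N → (∀ e ∈ N, ∀ v ∈ e, v ∈ V₂) →
      N.card ≤ (internalEdges V₂ M).card)
    (hopt : ∀ N : Finset (Sym2 V), IsMatching G N →
      ((∀ N' : Finset (Sym2 V), IsMatching G N' → (∀ e ∈ N', ∀ v ∈ e, v ∈ V₁) →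
        N'.card ≤ (internalEdges V₁ N).card) ∧
       (∀ N' : Finset (Sym2 V), IsMatching G N' → (∀ e ∈ N', ∀ v ∈ e, v ∈ V₂) →
        N'.card ≤ (internalEdges V₂ N).card)) →
      N.card ≤ M.card) :
    (∀ e ∈ G.edgeSet, e ∉ M → ¬ IsMatching G (insert e M)) ∧
    (∀ N : Finset (Sym2 V), IsMatching G N → N.card ≤ 2 * M.card) := by
  have hmax : ∀ e ∈ G.edgeSet, e ∉ M → ¬ IsMatching G (insert e M) := by
    intro e he heM hins
    have hsub : ∀ (A : Finset V), (internalEdges A M).card ≤ (internalEdges A (insert e M)).card := by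
      intro A
      apply Finset.card_le_card
      intro x hx
      simp only [internalEdges, Finset.mem_filter, Finset.mem_insert] at hx ⊢
      exact ⟨Or.inr hx.1, hx.2⟩
    have h1 : ∀ N' : Finset (Sym2 V), IsMatching G N' → (∀ f ∈ N', ∀ v ∈ f, v ∈ V₁) →
        N'.card ≤ (internalEdges V₁ (insert e M)).card := fun N' hN' hin =>
      le_trans (hres1 N' hN' hin) (hsub V₁)
    have h2 : ∀ N' : Finset (Sym2 V), IsMatching G N' → (∀ f ∈ N', ∀ v ∈ f, v ∈ V₂) →
        N'.card ≤ (internalEdges V₂ (insert e M)).card := fun N' hN' hin =>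
      le_trans (hres2 N' hN' hin) (hsub V₂)
    have hle := hopt (insert e M) hins ⟨h1, h2⟩
    rw [Finset.card_insert_of_notMem heM] at hle
    omega
  refine ⟨hmax, ?_⟩
  intro N hN
  -- every edge of N shares a vertex with some edge of M
  have key : ∀ e ∈ N, ∃ f ∈ M, ∃ v, v ∈ e ∧ v ∈ f := by
    intro e heN
    by_cases heM : e ∈ M
    · obtain ⟨a, b⟩ := e
      exact ⟨s(a, b), heM, a, by simp, by simp⟩
    · have he : e ∈ G.edgeSet := hN.1 heN
      have hnot := hmax e he heM
      rw [IsMatching] at hnot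
      push_neg at hnot
      have hsub : ↑(insert e M) ⊆ G.edgeSet := by
        intro x hx
        simp only [Finset.coe_insert, Set.mem_insert_iff] at hx
        rcases hx with rfl | hx
        · exact he
        · exact hM.1 hx
      obtain ⟨v, e', he', f', hf', hve', hvf', hne⟩ := hnot hsub
      simp only [Finset.mem_insert] at he' hf'
      rcases he' with rfl | he'
      · rcases hf' with rfl | hf'
        · exact absurd rfl hne
        · exact ⟨f', hf', v, hve', hvf'⟩
      · rcases hf' with rfl | hf'
        · exact ⟨e', he', v, hvf', hve'⟩
        · exact absurd (hM.2 v e' he' f' hf' hve' hvf') hne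
  set φ : Sym2 V → Sym2 V := fun e =>
    if h : ∃ f ∈ M, ∃ v, v ∈ e ∧ v ∈ f then h.choose else e with hφ
  have hφspec : ∀ e ∈ N, φ e ∈ M ∧ ∃ v, v ∈ e ∧ v ∈ φ e := by
    intro e heN
    have h := key e heN
    simp only [hφ, dif_pos h]
    exact ⟨h.choose_spec.1, h.choose_spec.2⟩
  apply Finset.card_le_mul_card_image_of_maps_to (f := φ) (fun e heN => (hφspec e heN).1)
  intro f hf
  obtain ⟨a, b⟩ := f
  have hss : (N.filter fun e => φ e = s(a, b)) ⊆
      (N.filter fun e => a ∈ e) ∪ (N.filter fun e => b ∈ e) := by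
    intro e he
    simp only [Finset.mem_filter] at he
    obtain ⟨v, hv1, hv2⟩ := (hφspec e he.1).2
    rw [he.2] at hv2
    simp only [Finset.mem_union, Finset.mem_filter]
    rcases Sym2.mem_iff.mp hv2 with rfl | rfl
    · exact Or.inl ⟨he.1, hv1⟩
    · exact Or.inr ⟨he.1, hv1⟩
  calc (N.filter fun e => φ e = s(a, b)).card
      ≤ ((N.filter fun e => a ∈ e) ∪ (N.filter fun e => b ∈ e)).card :=
        Finset.card_le_card hss
    _ ≤ (N.filter fun e => a ∈ e).card + (N.filter fun e => b ∈ e).card :=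
        Finset.card_union_le _ _
    _ ≤ 1 + 1 := by
        gcongr <;>
        · apply Finset.card_le_one.mpr
          intro x hx y hy
          simp only [Finset.mem_filter] at hx hy
          exact hN.2 _ x hx.1 y hy.1 hx.2 hy.2
    _ = 2 := rfl
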